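/- Let (X,f) be a TDS and φ, ψ ∈ C(X,ℝ) with ψ > 0. Then P_ψ(φ) = lim_{ε→0} limsup_{T→∞} (1/T) log P_{ψ,T}(f,φ,ε), i.e., the induced pressure defined via spanning sets coincides with the one defined via separated sets. -/

import Mathlib

open MeasureTheory Filter Topology Set

variable {X : Type*}

/-- Birkhoff sum `S_n φ (x) = ∑_{i<n} φ(f^i x)`. -/
noncomputable def birkhoff (f : X → X) (φ : X → ℝ) (n : ℕ) (x : X) : ℝ :=
  ∑ i ∈ Finset.range n, φ (f^[i] x)

/-- The `n`-th Bowen metric. -/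
noncomputable def dynDist [MetricSpace X] (f : X → X) (n : ℕ) (x y : X) : ℝ :=
  ⨆ i : Fin n, dist (f^[(i : ℕ)] x) (f^[(i : ℕ)] y)

/-- `F` is an `(n,ε)`-spanning set of `Z`. -/
def IsSpanningSet [MetricSpace X] (f : X → X) (n : ℕ) (ε : ℝ) (Z : Set X) (F : Finset X) : Prop :=
  ∀ y ∈ Z, ∃ x ∈ F, dynDist f n x y ≤ ε

/-- `E` is `(n,ε)`-separated. -/
def IsSeparatedSet [MetricSpace X] (f : X → X) (n : ℕ) (ε : ℝ) (E : Finset X) : Prop :=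
  ∀ x ∈ E, ∀ y ∈ E, x ≠ y → ε < dynDist f n x y

/-- `S_T = {n : ∃ x, S_n ψ(x) ≤ T < S_{n+1} ψ(x)}`. -/
def STset (f : X → X) (ψ : X → ℝ) (T : ℝ) : Set ℕ :=
  {n | ∃ x : X, birkhoff f ψ n x ≤ T ∧ T < birkhoff f ψ (n + 1) x}

/-- `X_n = {x : S_n ψ(x) ≤ T < S_{n+1} ψ(x)}`. -/
def Xset (f : X → X) (ψ : X → ℝ) (T : ℝ) (n : ℕ) : Set X :=
  {x | birkhoff f ψ n x ≤ T ∧ T < birkhoff f ψ (n + 1) x}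

/-- `Q_{ψ,T}(f,φ,ε)`, the spanning-set quantity. -/
noncomputable def Qspan [MetricSpace X] (f : X → X) (φ ψ : X → ℝ) (T ε : ℝ) : ℝ :=
  sInf { r : ℝ | ∃ F : ℕ → Finset X,
    (∀ n ∈ STset f ψ T, IsSpanningSet f n ε (Xset f ψ T n) (F n)) ∧
    r = ∑' n : ℕ, Set.indicator (STset f ψ T)
        (fun n => ∑ x ∈ F n, Real.exp (birkhoff f φ n x)) n }

/-- `P_{ψ,T}(f,φ,ε)`, the separated-set quantity. -/
noncomputable def Psep [MetricSpace X] (f : X → X) (φ ψ : X → ℝ) (T ε : ℝ) : ℝ :=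
  sSup { r : ℝ | ∃ E : ℕ → Finset X,
    (∀ n ∈ STset f ψ T, (E n : Set X) ⊆ Xset f ψ T n ∧ IsSeparatedSet f n ε (E n)) ∧
    r = ∑' n : ℕ, Set.indicator (STset f ψ T)
        (fun n => ∑ x ∈ E n, Real.exp (birkhoff f φ n x)) n }

/-- The `ψ`-induced topological pressure of `φ`. -/
noncomputable def inducedPressure [MetricSpace X] (f : X → X) (φ ψ : X → ℝ) : EReal :=
  ⨆ (ε : ℝ) (_ : 0 < ε),
    Filter.limsup (fun T : ℝ => ((T⁻¹ * Real.log (Qspan f φ ψ T ε) : ℝ) : EReal)) atTop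

/-- Largest sum over `(n,ε)`-separated sets of `X`. -/
noncomputable def sepSum [MetricSpace X] (f : X → X) (φ : X → ℝ) (n : ℕ) (ε : ℝ) : ℝ :=
  sSup { r : ℝ | ∃ E : Finset X, IsSeparatedSet f n ε E ∧
    r = ∑ x ∈ E, Real.exp (birkhoff f φ n x) }

/-- The classical (Walters) topological pressure. -/
noncomputable def topPressure [MetricSpace X] (f : X → X) (φ : X → ℝ) : EReal :=
  ⨆ (ε : ℝ) (_ : 0 < ε),
    Filter.limsup (fun n : ℕ => (((n : ℝ)⁻¹ * Real.log (sepSum f φ n ε) : ℝ) : EReal)) atTop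

set_option linter.unusedSectionVars false

section AuxLemmas

variable (f : X → X) (φ ψ : X → ℝ)

lemma birkhoff_ge {c : ℝ} (hc : ∀ x, c ≤ ψ x) (n : ℕ) (x : X) :
    (n : ℝ) * c ≤ birkhoff f ψ n x := by
  calc (n:ℝ) * c = ∑ _i ∈ Finset.range n, c := by simp [mul_comm]
  _ ≤ _ := Finset.sum_le_sum fun i _ => hc _

lemma birkhoff_abs_le {M : ℝ} (hM : ∀ x, |φ x| ≤ M) (n : ℕ) (x : X) :
    |birkhoff f φ n x| ≤ n * M := by
  calc |∑ i ∈ Finset.range n, φ (f^[i] x)| ≤ ∑ i ∈ Finset.range n, |φ (f^[i] x)| :=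
    Finset.abs_sum_le_sum_abs _ _
  _ ≤ ∑ _i ∈ Finset.range n, M := Finset.sum_le_sum fun i _ => hM _
  _ = n * M := by simp [mul_comm]

variable [MetricSpace X]

lemma dist_le_dynDist (n : ℕ) (x y : X) {i : ℕ} (hi : i < n) :
    dist (f^[i] x) (f^[i] y) ≤ dynDist f n x y :=
  le_ciSup (f := fun j : Fin n => dist (f^[(j : ℕ)] x) (f^[(j : ℕ)] y))
    (Set.Finite.bddAbove (Set.finite_range _)) (⟨i, hi⟩ : Fin n)

lemma dynDist_nonneg (n : ℕ) (x y : X) : 0 ≤ dynDist f n x y :=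
  Real.iSup_nonneg fun _ => dist_nonneg

lemma dynDist_self (n : ℕ) (x : X) : dynDist f n x x = 0 :=
  le_antisymm (Real.iSup_le (fun _ => by simp) le_rfl) (dynDist_nonneg f n x x)

lemma dynDist_comm (n : ℕ) (x y : X) : dynDist f n x y = dynDist f n y x := by
  unfold dynDist; simp_rw [dist_comm]

lemma dynDist_triangle (n : ℕ) (x y z : X) :
    dynDist f n x z ≤ dynDist f n x y + dynDist f n y z :=
  Real.iSup_le (fun i => (dist_triangle _ (f^[(i:ℕ)] y) _).trans
    (add_le_add (dist_le_dynDist f n x y i.2) (dist_le_dynDist f n y z i.2)))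
    (add_nonneg (dynDist_nonneg f n x y) (dynDist_nonneg f n y z))

variable [CompactSpace X]

lemma exists_dynDist_mod (hf : Continuous f) (n : ℕ) {δ : ℝ} (hδ : 0 < δ) :
    ∃ δ' > 0, ∀ x y : X, dist x y < δ' → ∀ i < n, dist (f^[i] x) (f^[i] y) ≤ δ := by
  induction n with
  | zero => exact ⟨δ, hδ, fun x y _ i hi => absurd hi (Nat.not_lt_zero i)⟩
  | succ n ih =>
    obtain ⟨δ₁, hδ₁, h₁⟩ := ih
    have hfc : UniformContinuous (f^[n]) :=
      CompactSpace.uniformContinuous_of_continuous (hf.iterate n)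
    obtain ⟨δ₂, hδ₂, h₂⟩ := Metric.uniformContinuous_iff.1 hfc δ hδ
    refine ⟨min δ₁ δ₂, lt_min hδ₁ hδ₂, fun x y hxy i hi => ?_⟩
    rcases Nat.lt_succ_iff_lt_or_eq.1 hi with h | rfl
    · exact h₁ x y (hxy.trans_le (min_le_left _ _)) i h
    · exact (h₂ (hxy.trans_le (min_le_right _ _))).le

lemma exists_spanning (hf : Continuous f) (n : ℕ) {δ : ℝ} (hδ : 0 < δ) :
    ∃ F : Finset X, ∀ y : X, ∃ x ∈ F, dynDist f n x y ≤ δ := by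
  classical
  obtain ⟨δ', hδ', h⟩ := exists_dynDist_mod f hf n hδ
  obtain ⟨t, -, ht, hcov⟩ := finite_cover_balls_of_compact (isCompact_univ : IsCompact (Set.univ : Set X)) hδ'
  refine ⟨ht.toFinset, fun y => ?_⟩
  have h2 := hcov (Set.mem_univ y)
  rw [Set.mem_iUnion₂] at h2
  obtain ⟨x, hx, hxy⟩ := h2
  refine ⟨x, ht.mem_toFinset.2 hx, Real.iSup_le (fun i => ?_) hδ.le⟩
  exact h x y (Metric.mem_ball'.1 hxy) i i.2

lemma sep_inj {n : ℕ} {ε δ : ℝ} (hε : 0 < ε) (hδε : 2*δ ≤ ε) {E F : Finset X} {Z : Set X}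
    (hE : (E : Set X) ⊆ Z) (hsep : IsSeparatedSet f n ε E)
    (hspan : ∀ y ∈ Z, ∃ x ∈ F, dynDist f n x y ≤ δ) :
    ∃ g : X → X, (∀ x ∈ E, g x ∈ F ∧ dynDist f n (g x) x ≤ δ) ∧ Set.InjOn g E := by
  classical
  have h : ∀ x : X, ∃ z, (x ∈ E → z ∈ F ∧ dynDist f n z x ≤ δ) := by
    intro x
    by_cases hx : x ∈ E
    · obtain ⟨z, hz1, hz2⟩ := hspan x (hE hx); exact ⟨z, fun _ => ⟨hz1, hz2⟩⟩
    · exact ⟨x, fun hx' => absurd hx' hx⟩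
  choose g hg using h
  refine ⟨g, fun x hx => hg x hx, fun x hx y hy hxy => ?_⟩
  by_contra hne
  have h1 := (hg x (Finset.mem_coe.1 hx)).2
  have h2 := (hg y (Finset.mem_coe.1 hy)).2
  have hs := hsep x (Finset.mem_coe.1 hx) y (Finset.mem_coe.1 hy) hne
  have htri : dynDist f n x y ≤ 2*δ := by
    calc dynDist f n x y ≤ dynDist f n x (g x) + dynDist f n (g x) y := dynDist_triangle f n _ _ _
    _ = dynDist f n (g x) x + dynDist f n (g y) y := by rw [dynDist_comm, hxy]
    _ ≤ 2*δ := by linarith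
  linarith

lemma sep_card_le {n : ℕ} {ε δ : ℝ} (hε : 0 < ε) (hδε : 2*δ ≤ ε) {E F : Finset X} {Z : Set X}
    (hE : (E : Set X) ⊆ Z) (hsep : IsSeparatedSet f n ε E)
    (hspan : ∀ y ∈ Z, ∃ x ∈ F, dynDist f n x y ≤ δ) : E.card ≤ F.card := by
  obtain ⟨g, hg, hinj⟩ := sep_inj f hε hδε hE hsep hspan
  exact Finset.card_le_card_of_injOn g (fun x hx => (hg x hx).1)
    (fun x hx y hy h => hinj (Finset.mem_coe.2 hx) (Finset.mem_coe.2 hy) h)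

lemma sum_sep_le {n N : ℕ} (hnN : n ≤ N) {ε δ η : ℝ} (hε : 0 < ε) (hδε : 2*δ ≤ ε) (hη : 0 ≤ η)
    (hmod : ∀ u v : X, dist u v ≤ δ → |φ u - φ v| ≤ η)
    {E F : Finset X} {Z : Set X}
    (hE : (E : Set X) ⊆ Z) (hsep : IsSeparatedSet f n ε E)
    (hspan : ∀ y ∈ Z, ∃ x ∈ F, dynDist f n x y ≤ δ) :
    ∑ x ∈ E, Real.exp (birkhoff f φ n x) ≤
      Real.exp (N*η) * ∑ y ∈ F, Real.exp (birkhoff f φ n y) := by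
  classical
  obtain ⟨g, hg, hinj⟩ := sep_inj f hε hδε hE hsep hspan
  have key : ∀ x ∈ E, Real.exp (birkhoff f φ n x)
      ≤ Real.exp (N*η) * Real.exp (birkhoff f φ n (g x)) := by
    intro x hx
    rw [← Real.exp_add]
    apply Real.exp_le_exp.2
    have hterm : ∀ i < n, |φ (f^[i] x) - φ (f^[i] (g x))| ≤ η := by
      intro i hi
      have hd : dist (f^[i] (g x)) (f^[i] x) ≤ δ :=
        (dist_le_dynDist f n (g x) x hi).trans (hg x hx).2
      have : dist (f^[i] x) (f^[i] (g x)) ≤ δ := by rwa [dist_comm]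
      exact hmod _ _ this
    have hsum : birkhoff f φ n x - birkhoff f φ n (g x) ≤ n * η := by
      calc birkhoff f φ n x - birkhoff f φ n (g x)
          = ∑ i ∈ Finset.range n, (φ (f^[i] x) - φ (f^[i] (g x))) := by
            rw [Finset.sum_sub_distrib]; rfl
      _ ≤ ∑ _i ∈ Finset.range n, η := Finset.sum_le_sum fun i hi =>
            (le_abs_self _).trans (hterm i (Finset.mem_range.1 hi))
      _ = n*η := by simp [mul_comm]
    have hNn : (n:ℝ)*η ≤ N*η := mul_le_mul_of_nonneg_right (by exact_mod_cast hnN) hη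
    linarith
  calc ∑ x ∈ E, Real.exp (birkhoff f φ n x)
      ≤ ∑ x ∈ E, Real.exp (N*η) * Real.exp (birkhoff f φ n (g x)) := Finset.sum_le_sum key
  _ = Real.exp (N*η) * ∑ x ∈ E, Real.exp (birkhoff f φ n (g x)) := by rw [Finset.mul_sum]
  _ ≤ Real.exp (N*η) * ∑ y ∈ F, Real.exp (birkhoff f φ n y) := by
      apply mul_le_mul_of_nonneg_left _ (Real.exp_nonneg _)
      rw [← Finset.sum_image (g := g) (f := fun y => Real.exp (birkhoff f φ n y))
        (fun x hx y hy h => hinj (Finset.mem_coe.2 hx) (Finset.mem_coe.2 hy) h)]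
      exact Finset.sum_le_sum_of_subset_of_nonneg
        (Finset.image_subset_iff.2 fun x hx => (hg x hx).1) (fun _ _ _ => Real.exp_nonneg _)

end AuxLemmas

section MainAux

variable [MetricSpace X]

/-- The defining set for `Qspan`. -/
def QspanSet (f : X → X) (φ ψ : X → ℝ) (T ε : ℝ) : Set ℝ :=
  { r : ℝ | ∃ F : ℕ → Finset X,
    (∀ n ∈ STset f ψ T, IsSpanningSet f n ε (Xset f ψ T n) (F n)) ∧
    r = ∑' n : ℕ, Set.indicator (STset f ψ T)
        (fun n => ∑ x ∈ F n, Real.exp (birkhoff f φ n x)) n }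

/-- The defining set for `Psep`. -/
def PsepSet (f : X → X) (φ ψ : X → ℝ) (T ε : ℝ) : Set ℝ :=
  { r : ℝ | ∃ E : ℕ → Finset X,
    (∀ n ∈ STset f ψ T, (E n : Set X) ⊆ Xset f ψ T n ∧ IsSeparatedSet f n ε (E n)) ∧
    r = ∑' n : ℕ, Set.indicator (STset f ψ T)
        (fun n => ∑ x ∈ E n, Real.exp (birkhoff f φ n x)) n }

lemma Qspan_eq (f : X → X) (φ ψ : X → ℝ) (T ε : ℝ) :
    Qspan f φ ψ T ε = sInf (QspanSet f φ ψ T ε) := rfl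

lemma Psep_eq (f : X → X) (φ ψ : X → ℝ) (T ε : ℝ) :
    Psep f φ ψ T ε = sSup (PsepSet f φ ψ T ε) := rfl

end MainAux

lemma ereal_le_of_forall_pos {x y : EReal} (h : ∀ K : ℝ, 0 < K → x ≤ (K : EReal) + y) :
    x ≤ y := by
  induction y using EReal.rec with
  | bot =>
    have := h 1 one_pos
    simpa [EReal.add_bot] using this
  | coe b =>
    induction x using EReal.rec with
    | bot => exact bot_le
    | coe a =>
      apply EReal.coe_le_coe_iff.2
      by_contra hab
      push_neg at hab
      have := h ((a - b)/2) (by linarith)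
      rw [← EReal.coe_add, EReal.coe_le_coe_iff] at this
      linarith
    | top =>
      exfalso
      have := h 1 one_pos
      rw [← EReal.coe_add] at this
      exact (EReal.coe_lt_top _).not_ge this
  | top => exact le_top


set_option maxHeartbeats 2000000 in
/-- the induced pressure can be computed via separated sets. -/
theorem stmt4 [MetricSpace X] [CompactSpace X] [Nonempty X]
    (f : X → X) (φ ψ : X → ℝ) (hf : Continuous f) (hφ : Continuous φ) (hψ : Continuous ψ)
    (hpos : ∀ x, 0 < ψ x) :
    inducedPressure f φ ψ =
      ⨆ (ε : ℝ) (_ : 0 < ε),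
        Filter.limsup (fun T : ℝ => ((T⁻¹ * Real.log (Psep f φ ψ T ε) : ℝ) : EReal)) atTop := by
  classical
  -- minimum of ψ and bound for |φ|
  obtain ⟨xc, -, hcle⟩ := isCompact_univ.exists_isMinOn Set.univ_nonempty hψ.continuousOn
  set c := ψ xc with hcdef
  have hc0 : 0 < c := hpos xc
  have hcψ : ∀ x : X, c ≤ ψ x := fun x => hcle (Set.mem_univ x)
  obtain ⟨xM, -, hMge⟩ := isCompact_univ.exists_isMaxOn Set.univ_nonempty hφ.abs.continuousOn
  set M := |φ xM| with hMdef
  have hM0 : 0 ≤ M := abs_nonneg _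
  have hMφ : ∀ x : X, |φ x| ≤ M := fun x => hMge (Set.mem_univ x)
  set N : ℝ → ℕ := fun T => ⌊T / c⌋₊ + 1 with hNdef
  -- finiteness of S_T
  have hST_lt : ∀ (T : ℝ) (n : ℕ), n ∈ STset f ψ T → n < N T := by
    intro T n hn
    obtain ⟨x, hx1, -⟩ := hn
    have h1 : (n : ℝ) * c ≤ T := le_trans (birkhoff_ge f ψ hcψ n x) hx1
    have h2 : (n : ℝ) ≤ T / c := (le_div_iff₀ hc0).2 h1
    have h3 := Nat.le_floor h2
    simp only [hNdef]
    omega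
  -- nonemptiness of S_T
  have hST_ne : ∀ T : ℝ, 0 ≤ T → ∃ n, n ∈ STset f ψ T := by
    intro T hT
    obtain ⟨x⟩ : Nonempty X := inferInstance
    have hP : ∃ m : ℕ, T < birkhoff f ψ m x := by
      refine ⟨N T, lt_of_lt_of_le ?_ (birkhoff_ge f ψ hcψ (N T) x)⟩
      have h1 : T / c < (N T : ℝ) := by
        have h2 := Nat.lt_floor_add_one (T / c)
        simp only [hNdef]
        push_cast
        linarith
      calc T = T / c * c := by field_simp
      _ < (N T : ℝ) * c := mul_lt_mul_of_pos_right h1 hc0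
    have hm0 : Nat.find hP ≠ 0 := by
      intro h0
      have hsp := Nat.find_spec hP
      rw [h0] at hsp
      simp only [birkhoff, Finset.range_zero, Finset.sum_empty] at hsp
      linarith
    obtain ⟨k, hk⟩ := Nat.exists_eq_succ_of_ne_zero hm0
    refine ⟨k, x, ?_, ?_⟩
    · exact not_lt.1 (Nat.find_min hP (by omega))
    · have hsp := Nat.find_spec hP
      rw [hk] at hsp
      exact hsp
  -- tsum reduction
  have hind : ∀ (T : ℝ) (u : ℕ → ℝ),
      (∑' n : ℕ, Set.indicator (STset f ψ T) u n)
        = ∑ n ∈ Finset.range (N T), Set.indicator (STset f ψ T) u n := by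
    intro T u
    apply tsum_eq_sum
    intro n hn
    exact Set.indicator_of_notMem (fun hmem => hn (Finset.mem_range.2 (hST_lt T n hmem))) u
  -- elements of QspanSet are nonnegative
  have hQS_nonneg : ∀ T ε r, r ∈ QspanSet f φ ψ T ε → 0 ≤ r := by
    rintro T ε r ⟨F, -, rfl⟩
    exact tsum_nonneg fun n => Set.indicator_nonneg
      (fun k _ => Finset.sum_nonneg fun x _ => (Real.exp_pos _).le) n
  -- QspanSet is nonempty
  have hQS_ne : ∀ T ε : ℝ, 0 < ε → (QspanSet f φ ψ T ε).Nonempty := by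
    intro T ε hε
    choose F hF using fun n => exists_spanning f hf n hε
    exact ⟨_, F, fun n _ y _ => hF n y, rfl⟩
  -- lower bound for elements of QspanSet
  have hQ_elt_lb : ∀ T : ℝ, 0 ≤ T → ∀ (ε r : ℝ), r ∈ QspanSet f φ ψ T ε →
      Real.exp (-((N T : ℝ) * M)) ≤ r := by
    intro T hT ε r hr
    obtain ⟨F, hF, rfl⟩ := hr
    obtain ⟨n0, hn0⟩ := hST_ne T hT
    obtain ⟨x0, hx0a, hx0b⟩ := hn0
    have hn0' : n0 ∈ STset f ψ T := ⟨x0, hx0a, hx0b⟩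
    have hx0' : x0 ∈ Xset f ψ T n0 := ⟨hx0a, hx0b⟩
    obtain ⟨y, hyF, -⟩ := hF n0 hn0' x0 hx0'
    rw [hind T]
    have hterm : Real.exp (-((N T : ℝ) * M)) ≤ Set.indicator (STset f ψ T)
        (fun n => ∑ x ∈ F n, Real.exp (birkhoff f φ n x)) n0 := by
      rw [Set.indicator_of_mem hn0']
      calc Real.exp (-((N T : ℝ) * M)) ≤ Real.exp (birkhoff f φ n0 y) := by
            apply Real.exp_le_exp.2
            have h1 := abs_le.1 (birkhoff_abs_le f φ hMφ n0 y)
            have h2 : (n0:ℝ) * M ≤ (N T : ℝ) * M := by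
              apply mul_le_mul_of_nonneg_right _ hM0
              exact_mod_cast (hST_lt T n0 hn0').le
            linarith [h1.1]
      _ ≤ ∑ x ∈ F n0, Real.exp (birkhoff f φ n0 x) :=
            Finset.single_le_sum (fun x _ => (Real.exp_pos _).le) hyF
    refine le_trans hterm ?_
    refine Finset.single_le_sum (f := fun m => Set.indicator (STset f ψ T)
        (fun n => ∑ x ∈ F n, Real.exp (birkhoff f φ n x)) m) ?_
        (Finset.mem_range.2 (hST_lt T n0 hn0'))
    intro m _
    refine Set.indicator_nonneg ?_ m
    intro k _
    exact Finset.sum_nonneg fun x _ => (Real.exp_pos _).le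
  -- positivity of Qspan
  have hQpos : ∀ T : ℝ, 0 ≤ T → ∀ ε : ℝ, 0 < ε →
      Real.exp (-((N T : ℝ) * M)) ≤ Qspan f φ ψ T ε := by
    intro T hT ε hε
    rw [Qspan_eq]
    exact le_csInf (hQS_ne T ε hε) (hQ_elt_lb T hT ε)
  -- PsepSet is bounded above
  have hPS_bdd : ∀ T ε : ℝ, 0 < ε → BddAbove (PsepSet f φ ψ T ε) := by
    intro T ε hε
    choose G hG using fun n => exists_spanning f hf n (half_pos hε)
    refine ⟨∑ n ∈ Finset.range (N T), (G n).card * Real.exp (n * M), ?_⟩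
    rintro r ⟨E, hE, rfl⟩
    rw [hind T]
    apply Finset.sum_le_sum
    intro n _
    by_cases hn : n ∈ STset f ψ T
    · rw [Set.indicator_of_mem hn]
      obtain ⟨hEsub, hEsep⟩ := hE n hn
      have hcard : (E n).card ≤ (G n).card :=
        sep_card_le f hε (by linarith) (Set.subset_univ ((E n : Set X))) hEsep
          (fun y _ => hG n y)
      calc ∑ x ∈ E n, Real.exp (birkhoff f φ n x)
          ≤ ∑ _x ∈ E n, Real.exp (n * M) := Finset.sum_le_sum fun x _ =>
            Real.exp_le_exp.2 ((le_abs_self _).trans (birkhoff_abs_le f φ hMφ n x))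
      _ = (E n).card * Real.exp (n * M) := by
            rw [Finset.sum_const, nsmul_eq_mul]
      _ ≤ (G n).card * Real.exp (n * M) := by
            apply mul_le_mul_of_nonneg_right _ (Real.exp_pos _).le
            exact_mod_cast hcard
    · rw [Set.indicator_of_notMem hn]
      positivity
  -- 0 is in PsepSet
  have hPS_ne : ∀ T ε : ℝ, (0:ℝ) ∈ PsepSet f φ ψ T ε := by
    intro T ε
    refine ⟨fun _ => ∅, fun n _ => ⟨by simp, fun x hx => absurd hx (Finset.notMem_empty x)⟩, ?_⟩
    simp
  -- maximal separated families
  have hmaxfam : ∀ T ε : ℝ, 0 < ε → ∃ E : ℕ → Finset X,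
      ∀ n, (E n : Set X) ⊆ Xset f ψ T n ∧ IsSeparatedSet f n ε (E n) ∧
        IsSpanningSet f n ε (Xset f ψ T n) (E n) := by
    intro T ε hε
    have hex : ∀ n : ℕ, ∃ E : Finset X, (E : Set X) ⊆ Xset f ψ T n ∧ IsSeparatedSet f n ε E ∧
        IsSpanningSet f n ε (Xset f ψ T n) E := by
      intro n
      obtain ⟨G, hG⟩ := exists_spanning f hf n (half_pos hε)
      set C := {k : ℕ | ∃ E : Finset X, (E : Set X) ⊆ Xset f ψ T n ∧
        IsSeparatedSet f n ε E ∧ E.card = k} with hC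
      have hC0 : 0 ∈ C :=
        ⟨∅, by simp, fun x hx => absurd hx (Finset.notMem_empty x), rfl⟩
      have hCbdd : BddAbove C := by
        refine ⟨G.card, ?_⟩
        rintro k ⟨E, hEs, hEsep, rfl⟩
        exact sep_card_le f hε (by linarith) (Set.subset_univ (E : Set X)) hEsep
          (fun y _ => hG y)
      obtain ⟨E, hEs, hEsep, hEcard⟩ := Nat.sSup_mem ⟨0, hC0⟩ hCbdd
      refine ⟨E, hEs, hEsep, ?_⟩
      intro y hy
      by_contra hcon
      push_neg at hcon
      have hyE : y ∉ E := by
        intro hyE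
        have h0 := hcon y hyE
        rw [dynDist_self] at h0
        linarith
      have hsep' : IsSeparatedSet f n ε (insert y E) := by
        intro a ha b hb hab
        rcases Finset.mem_insert.1 ha with rfl | ha'
        · rcases Finset.mem_insert.1 hb with rfl | hb'
          · exact absurd rfl hab
          · rw [dynDist_comm]; exact hcon b hb'
        · rcases Finset.mem_insert.1 hb with rfl | hb'
          · exact hcon a ha'
          · exact hEsep a ha' b hb' hab
      have hmem : (insert y E).card ∈ C :=
        ⟨insert y E, by rw [Finset.coe_insert]; exact Set.insert_subset hy hEs, hsep', rfl⟩
      have hle := le_csSup hCbdd hmem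
      rw [Finset.card_insert_of_notMem hyE, hEcard] at hle
      omega
    choose E hE using hex
    exact ⟨E, hE⟩
  -- Inequality A : Qspan ≤ Psep
  have hA : ∀ T : ℝ, 0 ≤ T → ∀ ε : ℝ, 0 < ε → Qspan f φ ψ T ε ≤ Psep f φ ψ T ε := by
    intro T hT ε hε
    obtain ⟨E, hE⟩ := hmaxfam T ε hε
    set r := ∑' n : ℕ, Set.indicator (STset f ψ T)
        (fun n => ∑ x ∈ E n, Real.exp (birkhoff f φ n x)) n with hr
    have hrQ : r ∈ QspanSet f φ ψ T ε := ⟨E, fun n _ => (hE n).2.2, hr⟩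
    have hrP : r ∈ PsepSet f φ ψ T ε := ⟨E, fun n _ => ⟨(hE n).1, (hE n).2.1⟩, hr⟩
    calc Qspan f φ ψ T ε ≤ r := by
          rw [Qspan_eq]
          exact csInf_le ⟨0, fun s hs => hQS_nonneg T ε s hs⟩ hrQ
    _ ≤ Psep f φ ψ T ε := by
          rw [Psep_eq]
          exact le_csSup (hPS_bdd T ε hε) hrP
  -- Inequality B : Psep ≤ exp(N·η) · Qspan
  have hB : ∀ T : ℝ, 0 ≤ T → ∀ ε : ℝ, 0 < ε → ∀ δ : ℝ, 0 < δ → 2*δ ≤ ε →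
      ∀ η : ℝ, 0 ≤ η → (∀ u v : X, dist u v ≤ δ → |φ u - φ v| ≤ η) →
      Psep f φ ψ T ε ≤ Real.exp ((N T : ℝ) * η) * Qspan f φ ψ T δ := by
    intro T hT ε hε δ hδ hδε η hη hmod
    rw [Psep_eq]
    apply csSup_le ⟨0, hPS_ne T ε⟩
    rintro r ⟨Efam, hEfam, rfl⟩
    rw [← div_le_iff₀' (Real.exp_pos _), Qspan_eq]
    apply le_csInf (hQS_ne T δ hδ)
    rintro s ⟨Ffam, hFfam, rfl⟩
    rw [div_le_iff₀' (Real.exp_pos _)]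
    rw [hind T, hind T, Finset.mul_sum]
    apply Finset.sum_le_sum
    intro n _
    by_cases hn : n ∈ STset f ψ T
    · rw [Set.indicator_of_mem hn, Set.indicator_of_mem hn]
      obtain ⟨hEsub, hEsep⟩ := hEfam n hn
      exact sum_sep_le f φ (hST_lt T n hn).le hε hδε hη hmod hEsub hEsep
        (fun y hy => hFfam n hn y hy)
    · rw [Set.indicator_of_notMem hn, Set.indicator_of_notMem hn]
      simp
  -- Conclusion
  apply le_antisymm
  · refine iSup₂_le fun ε hε => le_iSup₂_of_le ε hε ?_
    refine Filter.limsup_le_limsup ?_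
    filter_upwards [Filter.eventually_ge_atTop (1:ℝ)] with T hT
    have hT0 : (0:ℝ) ≤ T := zero_le_one.trans hT
    have hqp : 0 < Qspan f φ ψ T ε := lt_of_lt_of_le (Real.exp_pos _) (hQpos T hT0 ε hε)
    apply EReal.coe_le_coe_iff.2
    exact mul_le_mul_of_nonneg_left (Real.log_le_log hqp (hA T hT0 ε hε)) (inv_nonneg.2 hT0)
  · refine iSup₂_le fun ε hε => ?_
    apply ereal_le_of_forall_pos
    intro K hK
    have hcpos : (0:ℝ) < 1/c + 1 := by positivity
    set η := K / (1/c + 1) with hηdef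
    have hηpos : 0 < η := div_pos hK hcpos
    obtain ⟨δ₀, hδ₀, hmod₀⟩ := Metric.uniformContinuous_iff.1
      (CompactSpace.uniformContinuous_of_continuous hφ) η hηpos
    set δ := min (δ₀/2) (ε/2) with hδdef
    have hδpos : 0 < δ := lt_min (by linarith) (by linarith)
    have h2δ : 2*δ ≤ ε := by
      have h := min_le_right (δ₀/2) (ε/2)
      rw [hδdef]
      linarith
    have hmod : ∀ u v : X, dist u v ≤ δ → |φ u - φ v| ≤ η := by
      intro u v h
      have h1 : dist u v < δ₀ := by
        have h2 : δ ≤ δ₀/2 := min_le_left _ _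
        linarith
      have h3 := hmod₀ h1
      rw [Real.dist_eq] at h3
      exact h3.le
    have hpt : ∀ T : ℝ, 1 ≤ T → (T⁻¹ * Real.log (Psep f φ ψ T ε) : ℝ) ≤
        K + T⁻¹ * Real.log (Qspan f φ ψ T δ) := by
      intro T hT
      have hT0 : (0:ℝ) ≤ T := zero_le_one.trans hT
      have hTp : (0:ℝ) < T := lt_of_lt_of_le zero_lt_one hT
      have hqp : 0 < Qspan f φ ψ T δ :=
        lt_of_lt_of_le (Real.exp_pos _) (hQpos T hT0 δ hδpos)
      have hpp : 0 < Psep f φ ψ T ε :=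
        lt_of_lt_of_le (lt_of_lt_of_le (Real.exp_pos _) (hQpos T hT0 ε hε)) (hA T hT0 ε hε)
      have hPQ := hB T hT0 ε hε δ hδpos h2δ η hηpos.le hmod
      have hlog : Real.log (Psep f φ ψ T ε) ≤ (N T : ℝ) * η + Real.log (Qspan f φ ψ T δ) := by
        calc Real.log (Psep f φ ψ T ε)
            ≤ Real.log (Real.exp ((N T : ℝ) * η) * Qspan f φ ψ T δ) :=
              Real.log_le_log hpp hPQ
        _ = (N T : ℝ) * η + Real.log (Qspan f φ ψ T δ) := by
              rw [Real.log_mul (Real.exp_ne_zero _) (ne_of_gt hqp), Real.log_exp]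
      have hNle : (N T : ℝ) ≤ T/c + 1 := by
        have h1 := Nat.floor_le (div_nonneg hT0 hc0.le)
        have h2 : (N T : ℝ) = (⌊T/c⌋₊ : ℝ) + 1 := by simp [hNdef]
        linarith
      have hKey : T⁻¹ * ((N T : ℝ) * η) ≤ K := by
        have h1 : T⁻¹ * ((N T:ℝ) * η) ≤ T⁻¹ * ((T/c + 1) * η) :=
          mul_le_mul_of_nonneg_left (mul_le_mul_of_nonneg_right hNle hηpos.le)
            (inv_nonneg.2 hT0)
        have h2 : T⁻¹ * ((T/c + 1) * η) = η/c + η/T := by field_simp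
        have h3 : η/T ≤ η := div_le_self hηpos.le hT
        have h5 : η * (1/c + 1) = K := by
          rw [hηdef]; field_simp
        have h6 : η/c + η = η * (1/c + 1) := by field_simp
        linarith
      have hmul := mul_le_mul_of_nonneg_left hlog (inv_nonneg.2 hT0)
      rw [mul_add] at hmul
      linarith
    have hEv : (fun T:ℝ => ((T⁻¹ * Real.log (Psep f φ ψ T ε) : ℝ) : EReal)) ≤ᶠ[atTop]
        (fun _:ℝ => ((K:ℝ):EReal)) +
          (fun T:ℝ => ((T⁻¹ * Real.log (Qspan f φ ψ T δ) : ℝ) : EReal)) := by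
      filter_upwards [Filter.eventually_ge_atTop (1:ℝ)] with T hT
      have h := hpt T hT
      show ((T⁻¹ * Real.log (Psep f φ ψ T ε) : ℝ) : EReal)
        ≤ ((K:ℝ):EReal) + ((T⁻¹ * Real.log (Qspan f φ ψ T δ) : ℝ) : EReal)
      rw [← EReal.coe_add]
      exact EReal.coe_le_coe_iff.2 h
    calc Filter.limsup (fun T : ℝ => ((T⁻¹ * Real.log (Psep f φ ψ T ε) : ℝ) : EReal)) atTop
        ≤ Filter.limsup ((fun _:ℝ => ((K:ℝ):EReal)) +
            (fun T:ℝ => ((T⁻¹ * Real.log (Qspan f φ ψ T δ) : ℝ) : EReal))) atTop :=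
          Filter.limsup_le_limsup hEv
    _ ≤ Filter.limsup (fun _:ℝ => ((K:ℝ):EReal)) atTop +
          Filter.limsup (fun T:ℝ => ((T⁻¹ * Real.log (Qspan f φ ψ T δ) : ℝ) : EReal)) atTop :=
          EReal.limsup_add_le
            (Or.inl (by rw [Filter.limsup_const]; exact EReal.coe_ne_bot K))
            (Or.inl (by rw [Filter.limsup_const]; exact EReal.coe_ne_top K))
    _ = ((K:ℝ):EReal) +
          Filter.limsup (fun T:ℝ => ((T⁻¹ * Real.log (Qspan f φ ψ T δ) : ℝ) : EReal)) atTop := by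
          rw [Filter.limsup_const]
    _ ≤ ((K:ℝ):EReal) + inducedPressure f φ ψ := by
          refine add_le_add le_rfl ?_
          exact le_iSup₂_of_le δ hδpos le_rfl
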